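/- For nonnegative integers n1, n2, a, b, with n = n1+n2: Σ_{i,j≥0} q^{(n1−a)i+(n2−b)j−ij+i²+j²} · [n1 choose a−i]_q [n2 choose b−j]_q [n1+n2 choose n1+i−j]_q [n1+i choose n1]_q [n2+j choose n2]_q = [n choose n1]_q · Σ_{i≥0} q^{(n−a−b)i+i²} · [n+i choose i]_q [n choose a−i]_q [n choose b−i]_q. -/

import Mathlib

open scoped BigOperators

namespace DyckTilings

/-- In the step word of a lattice path, `false` is a down step `(1,0)` and
`true` is an up step `(0,1)`.  `pathX w x0 c` is the x-coordinate of the point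
of the path (started at a point with x-coordinate `x0` on the diagonal
`x + y = 0`) lying on the diagonal `x + y = c`, i.e. the point reached after
`c` steps. -/
def pathX (w : List Bool) (x0 : ℤ) (c : ℤ) : ℤ :=
  x0 + ((w.take c.toNat).count false : ℤ)

/-- `w` is (the step word of) a Dyck path of length `2 * n`: a lattice path
from `(0,0)` to `(n,n)` never going below the line `y = x`. -/
def IsDyckWord (n : ℕ) (w : List Bool) : Prop :=
  w.length = 2 * n ∧ w.count false = n ∧
    ∀ c : ℤ, 0 ≤ c → c ≤ 2 * n → 2 * pathX w 0 c ≤ c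

/-- the Dyck path `Δ_k`: `k` up steps followed by `k` down steps -/
def delta (k : ℕ) : List Bool :=
  List.replicate k true ++ List.replicate k false

/-- `Δ_{N 0, N 1, …, N (k-1)} = Δ_{N 0} * ⋯ * Δ_{N (k-1)}` (concatenation of
Dyck paths is concatenation of their step words) -/
def deltaComp (N : ℕ → ℕ) (k : ℕ) : List Bool :=
  ((List.range k).map fun i => delta (N i)).flatten

/-- the q-integer `[m]_q = 1 + q + ⋯ + q^(m-1)` -/
def qint {K : Type*} [CommRing K] (q : K) (m : ℕ) : K :=
  ∑ i ∈ Finset.range m, q ^ i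

/-- the q-factorial `[m]_q! = [1]_q [2]_q ⋯ [m]_q` -/
def qfact {K : Type*} [CommRing K] (q : K) (m : ℕ) : K :=
  ∏ i ∈ Finset.range m, qint q (i + 1)

/-- the q-binomial coefficient `[m choose j]_q`, equal to `0` when `j < 0` or
`j > m` -/
noncomputable def qbinom {K : Type*} [Field K] (q : K) (m : ℕ) (j : ℤ) : K :=
  if 0 ≤ j ∧ j ≤ m then qfact q m / (qfact q j.toNat * qfact q (m - j.toNat)) else 0

/-- the height (value of `y - x`) of the point of the path `w` (started on the
main diagonal) lying on the diagonal `x + y = c` -/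
def heightAt (w : List Bool) (c : ℕ) : ℤ :=
  (c : ℤ) - 2 * pathX w 0 (c : ℤ)

/-- the indices of the up steps of `w`; each chord of `w` consists of an up
step and its matching down step, so chords are indexed by `upSteps w` -/
def upSteps (w : List Bool) : Finset ℕ :=
  (Finset.range w.length).filter fun i => w.getD i false = true

/-- the index of the down step matched with the up step at index `i` -/
noncomputable def matchIdx (w : List Bool) (i : ℕ) : ℕ :=
  sInf {j : ℕ | i < j ∧ heightAt w (j + 1) = heightAt w i}

/-- the length `|c|` of the chord of the up step at index `i`: the difference
of the x-coordinates of the starting point of the up step and the ending point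
of the matching down step -/
noncomputable def chordLen (w : List Bool) (i : ℕ) : ℕ :=
  (pathX w 0 ((matchIdx w i : ℤ) + 1) - pathX w 0 (i : ℤ)).toNat

/-- the height `ht(c)` of the chord of the up step at index `i`: the chord lies
between the lines `y = x + ht(c) - 1` and `y = x + ht(c)` -/
def chordHt (w : List Bool) (i : ℕ) : ℕ := (heightAt w (i + 1)).toNat

/-- `ht(μ) = Σ_{c ∈ C(μ)} (ht(c) - 1)` -/
def htSum (w : List Bool) : ℕ := ∑ i ∈ upSteps w, (chordHt w i - 1)

/-! ### Skew shapes and (full) cover-inclusive Dyck tilings -/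

/-- The set of cells of the skew shape `lam/mu`, for Dyck paths `lam` and `mu`
with `mu` weakly above `lam`; the cell `(x,y)` is the unit square
`[x,x+1] × [y,y+1]`, and it belongs to `lam/mu` exactly when, on the diagonal
`x + y + 1` through its center, `mu` passes weakly to its left and `lam`
weakly to its right. -/
def skewCells (lam mu : List Bool) : Set (ℤ × ℤ) :=
  {c | pathX mu 0 (c.1 + c.2 + 1) ≤ c.1 ∧ c.1 + 1 ≤ pathX lam 0 (c.1 + c.2 + 1)}

/-- the number of cells `|λ/μ|` of the skew shape -/
noncomputable def ncells (lam mu : List Bool) : ℕ := (skewCells lam mu).ncard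

/-- the cells of a ribbon starting at the cell `p`, with `true` = north step
and `false` = east step -/
def cellsOf : List Bool → ℤ × ℤ → List (ℤ × ℤ)
  | [], p => [p]
  | s :: rest, p => p :: cellsOf rest (if s then (p.1, p.2 + 1) else (p.1 + 1, p.2))

/-- A Dyck tile: a ribbon whose sequence of cells, read from southwest to
northeast, follows a Dyck word (equivalently, the centers of its cells form a
Dyck path). -/
def IsDyckTile (s : Set (ℤ × ℤ)) : Prop :=
  ∃ (x0 y0 : ℤ) (k : ℕ) (u : List Bool), IsDyckWord k u ∧
    s = {c | c ∈ cellsOf u (x0, y0)}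

/-- southeast translation by `(k, -k)` -/
def shiftSE (k : ℤ) (s : Set (ℤ × ℤ)) : Set (ℤ × ℤ) :=
  (fun c => (c.1 + k, c.2 - k)) '' s

/-- cover-inclusiveness: if a tile `η₁` has a cell to the southeast of a cell
of a tile `η₂`, then that southeast translation of `η₂` is contained in `η₁` -/
def IsCoverInclusive (T : Set (Set (ℤ × ℤ))) : Prop :=
  ∀ η₁ ∈ T, ∀ η₂ ∈ T, ∀ c ∈ η₂, ∀ k : ℤ, 1 ≤ k →
    (c.1 + k, c.2 - k) ∈ η₁ → shiftSE k η₂ ⊆ η₁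

/-- `T` is a cover-inclusive Dyck tiling of the skew shape `lam/mu` (in
particular `mu` lies weakly above `lam`, so that `lam/mu` is defined). -/
def IsDyckTiling (lam mu : List Bool) (T : Set (Set (ℤ × ℤ))) : Prop :=
  (∀ c : ℤ, pathX mu 0 c ≤ pathX lam 0 c) ∧
  (∀ η ∈ T, IsDyckTile η) ∧
  T.PairwiseDisjoint id ∧
  (⋃ η ∈ T, η) = skewCells lam mu ∧
  IsCoverInclusive T

/-- the number of tiles `|T|` of a tiling -/
noncomputable def ntiles (T : Set (Set (ℤ × ℤ))) : ℕ := T.ncard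

/-- the half-length of a Dyck tile (a Dyck tile of length `2k` has `2k+1`
cells) -/
noncomputable def halfLen (s : Set (ℤ × ℤ)) : ℕ := s.ncard / 2

/-- `‖T‖`: the sum of the half-lengths of the tiles of `T` -/
noncomputable def normT (T : Set (Set (ℤ × ℤ))) : ℕ := ∑ᶠ η ∈ T, halfLen η

/-! ### Triangles, regions `λ/μ`, and truncated Dyck tilings

The unit cell `(x,y)` is cut by its diagonal of slope `-1` into a southwest
half-cell, the triangle `(x, y, false)`, and a northeast half-cell, the
triangle `(x, y, true)`. -/

/-- Membership of a triangle in the region `lam/mu`, where `lam` is a Dyck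
path of semilength `n` from `(0,0)` to `(n,n)` and `mu` is a lattice path
starting at `(-a, a)` lying weakly above `lam`; the region is bounded by
`lam`, `mu` and the two segments of slope `-1` joining `(0,0)` to `(-a,a)` and
`(n,n)` to the endpoint of `mu`. -/
def TriInRegion (n : ℕ) (lam mu : List Bool) (a : ℤ) (t : ℤ × ℤ × Bool) : Prop :=
  pathX mu (-a) (t.1 + t.2.1 + 1) ≤ t.1 ∧
  t.1 + 1 ≤ pathX lam 0 (t.1 + t.2.1 + 1) ∧
  (if t.2.2 then 0 ≤ t.1 + t.2.1 + 1 ∧ t.1 + t.2.1 + 2 ≤ 2 * (n : ℤ)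
   else 0 ≤ t.1 + t.2.1 ∧ t.1 + t.2.1 + 1 ≤ 2 * (n : ℤ))

/-- `L(λ; a, b)`: the lattice paths of up and down steps from `(-a, a)` to
`(n-b, n+b)` that never go below `lam` -/
def LSet (n : ℕ) (lam : List Bool) (a b : ℤ) : Set (List Bool) :=
  {w | w.length = 2 * n ∧ (w.count false : ℤ) = (n : ℤ) - b + a ∧
    ∀ c : ℤ, 0 ≤ c → c ≤ 2 * n → pathX w (-a) c ≤ pathX lam 0 c}

/-- twice the area `|λ/μ|` of the region `lam/mu` (i.e. the number of
triangles contained in it) -/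
def area2 (n : ℕ) (lam mu : List Bool) (a : ℤ) : ℤ :=
  ∑ d ∈ Finset.range (2 * n),
    (pathX lam 0 (d : ℤ) - pathX mu (-a) (d : ℤ) +
      (pathX lam 0 ((d : ℤ) + 1) - pathX mu (-a) ((d : ℤ) + 1)))

/-- the last (northeast) cell of a ribbon with start cell `(x0, y0)` and step
word `u` -/
def lastCell (x0 y0 : ℤ) (u : List Bool) : ℤ × ℤ :=
  (x0 + u.count false, y0 + u.count true)

/-- A truncated Dyck tile: a Dyck tile of positive length with the southwest
half-cell of its southwest cell and the northeast half-cell of its northeast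
cell cut off. -/
def IsTruncTile (s : Set (ℤ × ℤ × Bool)) : Prop :=
  ∃ (x0 y0 : ℤ) (k : ℕ) (u : List Bool), 0 < k ∧ IsDyckWord k u ∧
    s = {t : ℤ × ℤ × Bool | (t.1, t.2.1) ∈ cellsOf u (x0, y0)} \
        {(x0, y0, false), ((lastCell x0 y0 u).1, (lastCell x0 y0 u).2, true)}

/-- southeast translation of a set of triangles by `(1, -1)` -/
def shiftTriSE (s : Set (ℤ × ℤ × Bool)) : Set (ℤ × ℤ × Bool) :=
  (fun t => (t.1 + 1, t.2.1 - 1, t.2.2)) '' s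

/-- `T` is a cover-inclusive truncated Dyck tiling of (a subregion of) the
region `lam/mu`: the tiles are disjoint truncated Dyck tiles inside the
region, every tile whose southeast translate by `(1,-1)` meets the region has
this translate contained in a tile of `T`, and no two tiles share a border of
slope `-1`. -/
def IsTruncTiling (n : ℕ) (lam mu : List Bool) (a : ℤ)
    (T : Set (Set (ℤ × ℤ × Bool))) : Prop :=
  (∀ η ∈ T, IsTruncTile η) ∧
  T.PairwiseDisjoint id ∧
  (∀ η ∈ T, ∀ t ∈ η, TriInRegion n lam mu a t) ∧
  (∀ η ∈ T, (∃ t ∈ shiftTriSE η, TriInRegion n lam mu a t) →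
      ∃ η' ∈ T, shiftTriSE η ⊆ η') ∧
  (∀ η₁ ∈ T, ∀ η₂ ∈ T, η₁ ≠ η₂ →
      ∀ x y : ℤ, ¬((x, y, false) ∈ η₁ ∧ (x, y, true) ∈ η₂))

/-- the half-length of a truncated Dyck tile (a truncated Dyck tile of
half-length `k` consists of `4k` triangles) -/
noncomputable def halfLenT (s : Set (ℤ × ℤ × Bool)) : ℕ := s.ncard / 4

/-- `‖T‖` for truncated tilings: the sum of the half-lengths of the tiles -/
noncomputable def normTT (T : Set (Set (ℤ × ℤ × Bool))) : ℕ := ∑ᶠ η ∈ T, halfLenT η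

/-- `B_q(λ; a, b) = Σ_{μ ∈ L(λ;a,b)} Σ_{T ∈ TD(λ/μ)} q^{|λ/μ| - ‖T‖}`, a
polynomial in `q^{1/2}`, expressed in the variable `v = q^{1/2}` (so `q = v²`
and `q^{|λ/μ| - ‖T‖} = v^{2|λ/μ| - 2‖T‖}`). -/
noncomputable def B (v : RatFunc ℚ) (n : ℕ) (lam : List Bool) (a b : ℤ) : RatFunc ℚ :=
  ∑ᶠ mu ∈ LSet n lam a b, ∑ᶠ T ∈ {T | IsTruncTiling n lam mu a T},
    v ^ (area2 n lam mu a - 2 * (normTT T : ℤ))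

/-! ### Hermite histories and matchings -/

/-- A Hermite history on the Dyck path `mu` of length `2n`: a labeling of the
down steps of `mu` such that a down step of height `h` gets a label in
`{0, 1, …, h-1}` (encoded as a function on `ℕ` vanishing off the down steps). -/
def HHSet (n : ℕ) (mu : List Bool) : Set (ℕ → ℕ) :=
  {σ | (∀ j, j < 2 * n → mu.getD j true = false → σ j < (heightAt mu j).toNat) ∧
       ∀ j, ¬(j < 2 * n ∧ mu.getD j true = false) → σ j = 0}

/-- `‖H‖`: the sum of the labels of a Hermite history -/
def normH (n : ℕ) (σ : ℕ → ℕ) : ℕ := ∑ j ∈ Finset.range (2 * n), σ j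

/-- a complete matching on `{0, 1, …, 2n-1}` -/
def IsMatching (n : ℕ) (π : Set (ℕ × ℕ)) : Prop :=
  (∀ p ∈ π, p.1 < p.2 ∧ p.2 < 2 * n) ∧
  ∀ m, m < 2 * n → ∃! p, p ∈ π ∧ (p.1 = m ∨ p.2 = m)

/-- `M(μ)`: the complete matchings whose shape is the Dyck path `mu` (the
`i`-th step of `mu` is an up step iff `i` is the smaller element of its pair) -/
def MSet (n : ℕ) (mu : List Bool) : Set (Set (ℕ × ℕ)) :=
  {π | IsMatching n π ∧ ∀ i, i < 2 * n → (mu.getD i false = true ↔ ∃ p ∈ π, p.1 = i)}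

/-- the number of crossings of a matching -/
noncomputable def cro (π : Set (ℕ × ℕ)) : ℕ :=
  {pq : (ℕ × ℕ) × (ℕ × ℕ) | pq.1 ∈ π ∧ pq.2 ∈ π ∧
    pq.1.1 < pq.2.1 ∧ pq.2.1 < pq.1.2 ∧ pq.1.2 < pq.2.2}.ncard

/-- the number of nestings of a matching -/
noncomputable def nest (π : Set (ℕ × ℕ)) : ℕ :=
  {pq : (ℕ × ℕ) × (ℕ × ℕ) | pq.1 ∈ π ∧ pq.2 ∈ π ∧
    pq.1.1 < pq.2.1 ∧ pq.2.2 < pq.1.2}.ncard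

/-- `D(*/μ)`: cover-inclusive Dyck tilings of `λ/μ` over all Dyck paths `λ`
of length `2n` (for fixed `mu`, a tiling determines `lam`) -/
def DstarSet (n : ℕ) (mu : List Bool) : Set (Set (Set (ℤ × ℤ))) :=
  {T | ∃ lam, IsDyckWord n lam ∧ IsDyckTiling lam mu T}

/-- `D(2n)`: the disjoint union of the sets `D(ν/ρ)` over all pairs of Dyck
paths `ν, ρ` of length `2n`, realized as the set of triples `(ν, ρ, T)` -/
def DDSet (n : ℕ) : Set (List Bool × List Bool × Set (Set (ℤ × ℤ))) :=
  {x | IsDyckWord n x.1 ∧ IsDyckWord n x.2.1 ∧ IsDyckTiling x.1 x.2.1 x.2.2}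

local notation "qq" => (RatFunc.X : RatFunc ℚ)

lemma qq_ne : (RatFunc.X : RatFunc ℚ) ≠ 0 := RatFunc.X_ne_zero

lemma qint_ne (m : ℕ) : qint qq (m + 1) ≠ 0 := by
  have : qint qq (m+1) = algebraMap (Polynomial ℚ) (RatFunc ℚ)
      (∑ i ∈ Finset.range (m+1), Polynomial.X ^ i) := by
    rw [map_sum]
    refine Finset.sum_congr rfl fun i _ => ?_
    rw [map_pow, RatFunc.algebraMap_X]
  rw [this]
  apply RatFunc.algebraMap_ne_zero
  intro h
  have := congrArg (fun p => Polynomial.coeff p 0) h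
  simp [Polynomial.coeff_X_pow, Finset.sum_ite_eq'] at this

lemma qfact_ne (m : ℕ) : qfact qq m ≠ 0 := by
  refine Finset.prod_ne_zero_iff.2 fun i _ => qint_ne i

lemma qint_add (u v : ℕ) : qint qq (u + v) = qint qq u + qq ^ u * qint qq v := by
  rw [qint, Finset.sum_range_add, qint, qint, Finset.mul_sum]
  congr 1
  exact Finset.sum_congr rfl fun i _ => (pow_add qq u i)

lemma qfact_succ (m : ℕ) : qfact qq (m + 1) = qfact qq m * qint qq (m + 1) :=
  Finset.prod_range_succ _ _


lemma qbinom_of_neg (m : ℕ) {j : ℤ} (h : j < 0) : qbinom qq m j = 0 := by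
  rw [qbinom, if_neg]; rintro ⟨h0, _⟩; omega

lemma qbinom_of_gt (m : ℕ) {j : ℤ} (h : (m : ℤ) < j) : qbinom qq m j = 0 := by
  rw [qbinom, if_neg]; rintro ⟨_, h1⟩; omega

lemma qbinom_add_left (u v : ℕ) :
    qbinom qq (u + v) (u : ℤ) = qfact qq (u + v) / (qfact qq u * qfact qq v) := by
  rw [qbinom, if_pos ⟨Int.ofNat_nonneg u, by exact_mod_cast Nat.le_add_right u v⟩]
  simp

lemma qfact_zero : qfact (qq : RatFunc ℚ) 0 = 1 := Finset.prod_range_zero _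

lemma qbinom_zero (m : ℕ) : qbinom qq m 0 = 1 := by
  have h := qbinom_add_left 0 m
  simp only [Nat.zero_add, Nat.cast_zero] at h
  rw [h, qfact_zero, one_mul, div_self (qfact_ne m)]

lemma qbinom_self (m : ℕ) : qbinom qq m (m : ℤ) = 1 := by
  have h := qbinom_add_left m 0
  simp only [Nat.add_zero] at h
  rw [h, qfact_zero, mul_one, div_self (qfact_ne m)]

lemma qbinom_pascal (m : ℕ) (j : ℤ) :
    qbinom qq (m + 1) j = qbinom qq m j + qq ^ ((m : ℤ) + 1 - j) * qbinom qq m (j - 1) := by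
  rcases lt_or_ge j 0 with hj | hj
  · rw [qbinom_of_neg _ hj, qbinom_of_neg _ hj, qbinom_of_neg _ (by omega), mul_zero, add_zero]
  obtain ⟨jn, rfl⟩ := Int.eq_ofNat_of_zero_le hj
  rcases jn with _ | k
  · simp only [Nat.cast_zero]
    rw [qbinom_zero, qbinom_zero, qbinom_of_neg m (by norm_num : (0:ℤ) - 1 < 0),
      mul_zero, add_zero]
  rcases lt_or_ge (m + 1 : ℤ) (k + 1 : ℕ) with hgt | hle
  · rw [qbinom_of_gt _ (by exact_mod_cast hgt), qbinom_of_gt m (by push_cast at hgt ⊢; omega),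
      qbinom_of_gt m (by push_cast at hgt ⊢; omega), mul_zero, add_zero]
  have hkm : k ≤ m := by push_cast at hle; omega
  rcases Nat.eq_or_lt_of_le hkm with heq | hlt
  · -- j = m+1 case: k = m
    subst heq
    have h1 : qbinom qq (k + 1) (((k+1:ℕ)) : ℤ) = 1 := qbinom_self (k+1)
    have h2 : qbinom qq k (((k+1:ℕ)) : ℤ) = 0 := qbinom_of_gt k (by push_cast; omega)
    have h3 : qbinom qq k ((((k+1:ℕ)) : ℤ) - 1) = 1 := by
      rw [show (((k+1:ℕ)) : ℤ) - 1 = (k:ℤ) by push_cast; ring, qbinom_self]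
    rw [h1, h2, h3, show (k:ℤ) + 1 - ((k+1:ℕ) : ℤ) = 0 by push_cast; ring]
    norm_num
  · obtain ⟨r, rfl⟩ : ∃ r, m = k + r + 1 := ⟨m - k - 1, by omega⟩
    have e1 : qbinom qq (k + r + 1 + 1) ((k+1 : ℕ) : ℤ)
        = qfact qq (k + r + 2) / (qfact qq (k+1) * qfact qq (r+1)) := by
      have h := qbinom_add_left (k+1) (r+1)
      rw [show k+1+(r+1) = k + r + 1 + 1 by ring] at h
      rw [h, show k+r+1+1 = k+r+2 by ring]
    have e2 : qbinom qq (k + r + 1) ((k+1 : ℕ) : ℤ)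
        = qfact qq (k + r + 1) / (qfact qq (k+1) * qfact qq r) := by
      have h := qbinom_add_left (k+1) r
      rw [show k+1+r = k + r + 1 by ring] at h
      rw [h]
    have e3 : qbinom qq (k + r + 1) (((k+1 : ℕ) : ℤ) - 1)
        = qfact qq (k + r + 1) / (qfact qq k * qfact qq (r+1)) := by
      have h := qbinom_add_left k (r+1)
      rw [show k+(r+1) = k + r + 1 by ring] at h
      rw [show (((k+1 : ℕ) : ℤ) - 1) = ((k:ℕ) : ℤ) by push_cast; ring, h]
    have hexp : (qq : RatFunc ℚ) ^ (((k + r + 1 : ℕ) : ℤ) + 1 - ((k+1:ℕ) : ℤ))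
        = qq ^ ((r + 1 : ℕ) : ℤ) := by
      congr 1; push_cast; ring
    rw [e1, e2, e3, hexp, zpow_natCast]
    have key : qint qq (k + r + 2) = qint qq (r + 1) + qq ^ (r+1) * qint qq (k + 1) := by
      have h := qint_add (r+1) (k+1)
      rw [show r+1+(k+1) = k+r+2 by ring] at h
      exact h
    have f1 : qfact qq (k + r + 2) = qfact qq (k + r + 1) * qint qq (k + r + 2) := by
      rw [show k+r+2 = (k+r+1)+1 by ring, qfact_succ]
    have f2 : qfact qq (k + 1) = qfact qq k * qint qq (k + 1) := qfact_succ _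
    have f3 : qfact qq (r + 1) = qfact qq r * qint qq (r + 1) := qfact_succ _
    rw [f1, key, f2, f3]
    have h1 := qfact_ne k
    have h2 := qfact_ne r
    have h3 := qfact_ne (k+r+1)
    have h4 := qint_ne k
    have h5 := qint_ne r
    field_simp

lemma qbinom_top_zero (j : ℤ) : qbinom qq 0 j = if j = 0 then 1 else 0 := by
  rcases lt_trichotomy j 0 with h | h | h
  · rw [qbinom_of_neg _ h, if_neg (by omega)]
  · rw [h, if_pos rfl]; exact qbinom_zero 0
  · rw [qbinom_of_gt 0 (by exact_mod_cast h), if_neg (by omega)]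

lemma qvand (m1 m2 : ℕ) : ∀ c : ℤ, qbinom qq (m1 + m2) c =
    ∑ s ∈ Finset.range (m1 + 1),
      qq ^ (((m1 : ℤ) - s) * (c - s)) * qbinom qq m1 (s : ℤ) * qbinom qq m2 (c - s) := by
  induction m2 with
  | zero =>
    intro c
    by_cases hc : 0 ≤ c ∧ c ≤ m1
    · obtain ⟨cn, rfl⟩ := Int.eq_ofNat_of_zero_le hc.1
      have hcn : cn ≤ m1 := by exact_mod_cast hc.2
      rw [Finset.sum_eq_single cn]
      · rw [Nat.add_zero, sub_self, mul_zero, zpow_zero, one_mul, qbinom_zero, mul_one]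
      · intro s _ hs
        rw [qbinom_top_zero, if_neg (by push_cast; omega), mul_zero]
      · intro h; exact absurd (Finset.mem_range.2 (by omega)) h
    · push_neg at hc
      have hz : qbinom qq (m1 + 0) c = 0 := by
        rcases lt_or_ge c 0 with h | h
        · exact qbinom_of_neg _ h
        · exact qbinom_of_gt _ (by push_cast; omega)
      rw [hz, eq_comm]
      refine Finset.sum_eq_zero fun s hs => ?_
      have hs' : s ≤ m1 := by simpa [Nat.lt_succ_iff] using hs
      have hne : ¬(c - (s:ℤ) = 0) := by
        rcases lt_or_ge c 0 with h | h
        · omega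
        · have := hc h; omega
      rw [qbinom_top_zero, if_neg hne, mul_zero]
  | succ m2 ih =>
    intro c
    have hL : qbinom qq (m1 + (m2 + 1)) c
        = qbinom qq (m1 + m2) c
          + qq ^ (((m1 + m2 : ℕ) : ℤ) + 1 - c) * qbinom qq (m1 + m2) (c - 1) := by
      rw [show m1 + (m2 + 1) = (m1 + m2) + 1 by ring, qbinom_pascal]
    rw [hL, ih c, ih (c - 1), Finset.mul_sum, ← Finset.sum_add_distrib]
    refine Finset.sum_congr rfl fun s _ => ?_
    rw [qbinom_pascal m2 (c - s), mul_add]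
    congr 1
    have : c - s - 1 = c - 1 - s := by ring
    rw [this]
    rw [show qq ^ (((m1:ℤ) - s) * (c - s)) * qbinom qq m1 (s:ℤ) *
          (qq ^ ((m2 : ℤ) + 1 - (c - s)) * qbinom qq m2 (c - 1 - s))
        = (qq ^ (((m1:ℤ) - s) * (c - s)) * qq ^ ((m2 : ℤ) + 1 - (c - s))) *
          (qbinom qq m1 (s:ℤ) * qbinom qq m2 (c - 1 - s)) by ring]
    rw [← zpow_add₀ qq_ne, show ((m1:ℤ) - s) * (c - s) + ((m2 : ℤ) + 1 - (c - s))
        = (((m1 + m2 : ℕ) : ℤ) + 1 - c) + ((m1:ℤ) - s) * ((c - 1) - s) by push_cast; ring,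
      zpow_add₀ qq_ne]
    ring

noncomputable def Sker (m n1 n2 i j : ℕ) : RatFunc ℚ :=
  ∑ k ∈ Finset.range (i + 1),
    qq ^ (((i : ℤ) - k) * ((j : ℤ) - k)) * qbinom qq (m + k) (k : ℤ) *
      (qbinom qq n2 ((i : ℤ) - k) * qbinom qq n1 ((j : ℤ) - k))


lemma qbinom_pascal' (m k : ℕ) :
    qbinom qq (m + 1 + k) (k : ℤ)
      = qbinom qq (m + k) (k : ℤ) + qq ^ ((m : ℤ) + 1) * qbinom qq (m + k) ((k : ℤ) - 1) := by
  have h := qbinom_pascal (m + k) (k : ℤ)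
  rw [show m + k + 1 = m + 1 + k by ring] at h
  rw [h, show ((m + k : ℕ) : ℤ) + 1 - (k : ℤ) = (m : ℤ) + 1 by push_cast; ring]

lemma Sker_R1 (m n1 n2 i j : ℕ) :
    Sker (m + 1) n1 n2 (i + 1) (j + 1)
      = Sker m n1 n2 (i + 1) (j + 1) + qq ^ ((m : ℤ) + 1) * Sker (m + 1) n1 n2 i j := by
  have expand : ∀ k ∈ Finset.range (i + 2),
      qq ^ ((((i+1:ℕ) : ℤ) - k) * (((j+1:ℕ) : ℤ) - k)) * qbinom qq (m + 1 + k) (k : ℤ) *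
        (qbinom qq n2 (((i+1:ℕ) : ℤ) - k) * qbinom qq n1 (((j+1:ℕ) : ℤ) - k))
      = (qq ^ ((((i+1:ℕ) : ℤ) - k) * (((j+1:ℕ) : ℤ) - k)) * qbinom qq (m + k) (k : ℤ) *
          (qbinom qq n2 (((i+1:ℕ) : ℤ) - k) * qbinom qq n1 (((j+1:ℕ) : ℤ) - k)))
        + (qq ^ ((((i+1:ℕ) : ℤ) - k) * (((j+1:ℕ) : ℤ) - k)) *
            (qq ^ ((m : ℤ) + 1) * qbinom qq (m + k) ((k : ℤ) - 1)) *
          (qbinom qq n2 (((i+1:ℕ) : ℤ) - k) * qbinom qq n1 (((j+1:ℕ) : ℤ) - k))) := by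
    intro k _
    rw [qbinom_pascal']
    ring
  rw [Sker, Finset.sum_congr rfl expand, Finset.sum_add_distrib]
  congr 1
  rw [Finset.sum_range_succ']
  have h0 : qq ^ ((((i+1:ℕ) : ℤ) - (0:ℕ)) * (((j+1:ℕ) : ℤ) - (0:ℕ))) *
      (qq ^ ((m : ℤ) + 1) * qbinom qq (m + 0) (((0:ℕ) : ℤ) - 1)) *
      (qbinom qq n2 (((i+1:ℕ) : ℤ) - (0:ℕ)) * qbinom qq n1 (((j+1:ℕ) : ℤ) - (0:ℕ))) = 0 := by
    rw [qbinom_of_neg (m+0) (show ((0:ℕ):ℤ) - 1 < 0 by norm_num)]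
    ring
  rw [h0, add_zero, Sker, Finset.mul_sum]
  refine Finset.sum_congr rfl fun k _ => ?_
  have c1 : ((i + 1 : ℕ) : ℤ) - ((k + 1 : ℕ) : ℤ) = (i : ℤ) - k := by push_cast; ring
  have c2 : ((j + 1 : ℕ) : ℤ) - ((k + 1 : ℕ) : ℤ) = (j : ℤ) - k := by push_cast; ring
  have c3 : ((k + 1 : ℕ) : ℤ) - 1 = (k : ℤ) := by push_cast; ring
  rw [show ((k+1:ℕ) : ℤ) = ((k:ℤ) + 1) by push_cast; ring] at *
  rw [show (i+1:ℕ) = i+1 from rfl]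
  push_cast
  rw [show (i : ℤ) + 1 - ((k:ℤ)+1) = (i:ℤ) - k by ring,
    show (j : ℤ) + 1 - ((k:ℤ)+1) = (j:ℤ) - k by ring,
    show (k:ℤ) + 1 - 1 = (k:ℤ) by ring,
    show m + (k + 1) = m + 1 + k by ring]
  ring

lemma Sker_R2 (m n1 n2 i j : ℕ) :
    Sker m n1 (n2 + 1) (i + 1) j
      = Sker m n1 n2 (i + 1) j + qq ^ ((n2 : ℤ) + 1 + j - ((i : ℤ) + 1)) * Sker m n1 n2 i j := by
  have expand : ∀ k ∈ Finset.range (i + 2),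
      qq ^ ((((i+1:ℕ) : ℤ) - k) * ((j : ℤ) - k)) * qbinom qq (m + k) (k : ℤ) *
        (qbinom qq (n2+1) (((i+1:ℕ) : ℤ) - k) * qbinom qq n1 ((j : ℤ) - k))
      = (qq ^ ((((i+1:ℕ) : ℤ) - k) * ((j : ℤ) - k)) * qbinom qq (m + k) (k : ℤ) *
          (qbinom qq n2 (((i+1:ℕ) : ℤ) - k) * qbinom qq n1 ((j : ℤ) - k)))
        + (qq ^ ((((i+1:ℕ) : ℤ) - k) * ((j : ℤ) - k)) * qbinom qq (m + k) (k : ℤ) *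
            (qq ^ ((n2 : ℤ) + 1 - (((i+1:ℕ) : ℤ) - k)) *
              qbinom qq n2 ((((i+1:ℕ) : ℤ) - k) - 1) * qbinom qq n1 ((j : ℤ) - k))) := by
    intro k _
    rw [qbinom_pascal n2 (((i+1:ℕ) : ℤ) - k)]
    ring
  rw [Sker, Finset.sum_congr rfl expand, Finset.sum_add_distrib]
  congr 1
  rw [Finset.sum_range_succ]
  have hlast : qq ^ ((((i+1:ℕ) : ℤ) - (i+1:ℕ)) * ((j : ℤ) - (i+1:ℕ))) *
      qbinom qq (m + (i+1)) ((i+1:ℕ) : ℤ) *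
      (qq ^ ((n2 : ℤ) + 1 - (((i+1:ℕ) : ℤ) - (i+1:ℕ))) *
        qbinom qq n2 ((((i+1:ℕ) : ℤ) - (i+1:ℕ)) - 1) * qbinom qq n1 ((j : ℤ) - (i+1:ℕ))) = 0 := by
    rw [sub_self, qbinom_of_neg n2 (show (0:ℤ) - 1 < 0 by norm_num)]
    ring
  rw [hlast, add_zero, Sker, Finset.mul_sum]
  refine Finset.sum_congr rfl fun k hk => ?_
  have c0 : ((i + 1 : ℕ) : ℤ) = (i : ℤ) + 1 := by push_cast; ring
  rw [c0, show (i:ℤ) + 1 - (k:ℤ) - 1 = (i:ℤ) - k by ring]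
  rw [show qq ^ (((i:ℤ) + 1 - k) * ((j:ℤ) - k)) * qbinom qq (m + k) (k:ℤ) *
        (qq ^ ((n2:ℤ) + 1 - ((i:ℤ) + 1 - k)) * qbinom qq n2 ((i:ℤ) - k) * qbinom qq n1 ((j:ℤ) - k))
      = (qq ^ (((i:ℤ) + 1 - k) * ((j:ℤ) - k)) * qq ^ ((n2:ℤ) + 1 - ((i:ℤ) + 1 - k))) *
        (qbinom qq (m + k) (k:ℤ) * (qbinom qq n2 ((i:ℤ) - k) * qbinom qq n1 ((j:ℤ) - k))) by ring]
  rw [show qq ^ ((n2:ℤ) + 1 + j - ((i:ℤ) + 1)) *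
        (qq ^ (((i:ℤ) - k) * ((j:ℤ) - k)) * qbinom qq (m + k) (k:ℤ) *
          (qbinom qq n2 ((i:ℤ) - k) * qbinom qq n1 ((j:ℤ) - k)))
      = (qq ^ ((n2:ℤ) + 1 + j - ((i:ℤ) + 1)) * qq ^ (((i:ℤ) - k) * ((j:ℤ) - k))) *
        (qbinom qq (m + k) (k:ℤ) * (qbinom qq n2 ((i:ℤ) - k) * qbinom qq n1 ((j:ℤ) - k))) by ring]
  rw [← zpow_add₀ qq_ne, ← zpow_add₀ qq_ne]
  congr 2
  ring

lemma Sker_i0 (m n1 n2 j : ℕ) : Sker m n1 n2 0 j = qbinom qq n1 (j : ℤ) := by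
  rw [Sker, Finset.range_one, Finset.sum_singleton]
  norm_num [qbinom_zero]

lemma Sker_j0 (m n1 n2 i : ℕ) : Sker m n1 n2 i 0 = qbinom qq n2 (i : ℤ) := by
  rw [Sker, Finset.sum_eq_single 0]
  · norm_num [qbinom_zero]
  · intro k _ hk
    rw [qbinom_of_neg n1 (by push_cast; omega), mul_zero, mul_zero]
  · intro h
    exact absurd (Finset.mem_range.2 (by omega)) h

lemma Sker_n2zero (n1 m i j : ℕ) :
    Sker m n1 0 i j = qbinom qq (m + i) (i : ℤ) * qbinom qq n1 ((j : ℤ) - i) := by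
  rw [Sker, Finset.sum_eq_single i]
  · rw [sub_self, zero_mul, zpow_zero, one_mul, qbinom_zero 0, one_mul]
  · intro k hk hki
    have : ¬((i : ℤ) - k = 0) := by
      intro h; exact hki (by omega)
    rw [qbinom_top_zero, if_neg this, zero_mul, mul_zero]
  · intro h
    exact absurd (Finset.mem_range.2 (by omega)) h

lemma prodP1 (n1 i j : ℕ) :
    qbinom qq (n1 + i) (i : ℤ) * qbinom qq n1 ((j : ℤ) - i)
      = qbinom qq (n1 + i) (j : ℤ) * qbinom qq j (i : ℤ) := by
  by_cases hij : i ≤ j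
  · by_cases hjn : j ≤ n1 + i
    · obtain ⟨e, rfl⟩ : ∃ e, j = i + e := ⟨j - i, by omega⟩
      obtain ⟨f, rfl⟩ : ∃ f, n1 = e + f := ⟨n1 - e, by omega⟩
      have h1 : qbinom qq (e + f + i) (i : ℤ) = qfact qq (i + (e + f)) / (qfact qq i * qfact qq (e + f)) := by
        rw [show e + f + i = i + (e + f) by ring, qbinom_add_left]
      have h2 : qbinom qq (e + f) (((i + e : ℕ) : ℤ) - (i : ℕ)) = qfact qq (e + f) / (qfact qq e * qfact qq f) := by
        rw [show ((i + e : ℕ) : ℤ) - ((i : ℕ) : ℤ) = ((e : ℕ) : ℤ) by push_cast; ring, qbinom_add_left]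
      have h3 : qbinom qq (e + f + i) ((i + e : ℕ) : ℤ) = qfact qq (i + (e + f)) / (qfact qq (i + e) * qfact qq f) := by
        rw [show e + f + i = (i + e) + f by ring, qbinom_add_left, show (i+e)+f = i + (e+f) by ring]
      have h4 : qbinom qq (i + e) (i : ℤ) = qfact qq (i + e) / (qfact qq i * qfact qq e) :=
        qbinom_add_left i e
      rw [h1, h2, h3, h4]
      have := qfact_ne i; have := qfact_ne e; have := qfact_ne f
      have := qfact_ne (i + e); have := qfact_ne (e + f); have := qfact_ne (i + (e + f))
      field_simp
    · push_neg at hjn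
      rw [qbinom_of_gt n1 (j := (j:ℤ) - i) (by push_cast; omega),
        qbinom_of_gt (n1 + i) (j := (j:ℤ)) (by push_cast; omega), mul_zero, zero_mul]
  · push_neg at hij
    rw [qbinom_of_neg n1 (j := (j:ℤ) - i) (by push_cast; omega),
      qbinom_of_gt j (j := (i:ℤ)) (by push_cast; omega), mul_zero, mul_zero]

lemma Kker (n1 : ℕ) : ∀ n2 i j : ℕ,
    Sker (n1 + n2) n1 n2 i j = qbinom qq (n1 + i) (j : ℤ) * qbinom qq (n2 + j) (i : ℤ) := by
  intro n2
  induction n2 with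
  | zero =>
    intro i j
    rw [Nat.add_zero, Sker_n2zero, prodP1, Nat.zero_add]
  | succ n2 ih =>
    intro i
    induction i with
    | zero =>
      intro j
      rw [Sker_i0, Nat.add_zero]
      rw [show ((0:ℕ) : ℤ) = 0 from rfl, qbinom_zero, mul_one]
    | succ i ihi =>
      intro j
      rcases j with _ | j
      · rw [Sker_j0]
        rw [show ((0:ℕ) : ℤ) = 0 from rfl, qbinom_zero, one_mul, Nat.add_zero]
      · have hstep : Sker (n1 + (n2 + 1)) n1 (n2 + 1) (i + 1) (j + 1)
            = Sker (n1 + n2) n1 (n2 + 1) (i + 1) (j + 1)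
              + qq ^ (((n1 + n2 : ℕ) : ℤ) + 1) * Sker (n1 + n2 + 1) n1 (n2 + 1) i j := by
          rw [show n1 + (n2 + 1) = (n1 + n2) + 1 by ring, Sker_R1]
        rw [hstep, Sker_R2, ih (i+1) (j+1), ih i (j+1),
          show n1 + n2 + 1 = n1 + (n2 + 1) by ring, ihi j]
        -- now pure Pascal manipulation
        have hA : qbinom qq (n1 + (i + 1)) ((j + 1 : ℕ) : ℤ)
            = qbinom qq (n1 + i) ((j+1 : ℕ) : ℤ)
              + qq ^ (((n1:ℤ) + i) + 1 - ((j+1:ℕ) : ℤ)) * qbinom qq (n1 + i) (j : ℤ) := by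
          have h := qbinom_pascal (n1 + i) ((j+1 : ℕ) : ℤ)
          rw [show n1 + i + 1 = n1 + (i + 1) by ring] at h
          rw [h, show ((j+1:ℕ) : ℤ) - 1 = (j : ℤ) by push_cast; ring,
            show ((n1 + i : ℕ) : ℤ) + 1 = ((n1:ℤ) + i) + 1 by push_cast; ring]
        have hC : qbinom qq ((n2 + 1) + (j + 1)) ((i + 1 : ℕ) : ℤ)
            = qbinom qq (n2 + (j + 1)) ((i+1 : ℕ) : ℤ)
              + qq ^ (((n2:ℤ) + j + 1) + 1 - ((i+1:ℕ) : ℤ)) * qbinom qq (n2 + (j+1)) (i : ℤ) := by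
          have h := qbinom_pascal (n2 + (j + 1)) ((i+1 : ℕ) : ℤ)
          rw [show n2 + (j + 1) + 1 = (n2 + 1) + (j + 1) by ring] at h
          rw [h, show ((i+1:ℕ) : ℤ) - 1 = (i : ℤ) by push_cast; ring,
            show ((n2 + (j + 1) : ℕ) : ℤ) + 1 = ((n2:ℤ) + j + 1) + 1 by push_cast; ring]
        rw [hA, hC]
        have hz : qq ^ (((n1 + n2 : ℕ) : ℤ) + 1)
            = qq ^ (((n1:ℤ) + i) + 1 - ((j+1:ℕ) : ℤ)) * qq ^ (((n2:ℤ) + j + 1) + 1 - ((i+1:ℕ) : ℤ)) := by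
          rw [← zpow_add₀ qq_ne]
          congr 1
          push_cast
          ring
        have hw : qq ^ ((n2 : ℤ) + 1 + ((j+1 : ℕ) : ℤ) - ((i : ℤ) + 1))
            = qq ^ (((n2:ℤ) + j + 1) + 1 - ((i+1:ℕ) : ℤ)) := by
          congr 1
          push_cast
          ring
        rw [hz, hw, show (n2 + 1) + j = n2 + (j + 1) by ring]
        ring


lemma prodP2 (n1 n2 i j : ℕ) :
    qbinom qq (n1 + n2) ((n1 : ℤ) + i - j) * qbinom qq (n1 + i) (n1 : ℤ) *
        qbinom qq (n2 + j) (n2 : ℤ)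
      = qbinom qq (n1 + n2) (n1 : ℤ) *
          (qbinom qq (n1 + i) (j : ℤ) * qbinom qq (n2 + j) (i : ℤ)) := by
  by_cases h1 : j ≤ n1 + i
  · by_cases h2 : i ≤ n2 + j
    · obtain ⟨d1, hd1⟩ : ∃ d1 : ℕ, n1 + i = j + d1 := ⟨n1 + i - j, by omega⟩
      obtain ⟨d2, hd2⟩ : ∃ d2 : ℕ, n2 + j = i + d2 := ⟨n2 + j - i, by omega⟩
      have hdd : d1 + d2 = n1 + n2 := by omega
      have e1 : qbinom qq (n1 + n2) ((n1 : ℤ) + i - j)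
          = qfact qq (n1 + n2) / (qfact qq d1 * qfact qq d2) := by
        rw [show (n1 : ℤ) + i - j = (d1 : ℤ) by push_cast; omega, ← hdd, qbinom_add_left, hdd]
      have e2 := qbinom_add_left n1 i
      have e3 := qbinom_add_left n2 j
      have e4 := qbinom_add_left n1 n2
      have e5 : qbinom qq (n1 + i) (j : ℤ)
          = qfact qq (n1 + i) / (qfact qq j * qfact qq d1) := by
        rw [hd1, qbinom_add_left]
      have e6 : qbinom qq (n2 + j) (i : ℤ)
          = qfact qq (n2 + j) / (qfact qq i * qfact qq d2) := by
        rw [hd2, qbinom_add_left]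
      rw [e1, e2, e3, e4, e5, e6]
      have := qfact_ne d1; have := qfact_ne d2; have := qfact_ne i; have := qfact_ne j
      have := qfact_ne n1; have := qfact_ne n2
      field_simp
    · push_neg at h2
      rw [qbinom_of_gt (n1 + n2) (j := (n1:ℤ) + i - j) (by push_cast; omega),
        qbinom_of_gt (n2 + j) (j := (i:ℤ)) (by push_cast; omega)]
      ring
  · push_neg at h1
    rw [qbinom_of_neg (n1 + n2) (j := (n1:ℤ) + i - j) (by push_cast; omega),
      qbinom_of_gt (n1 + i) (j := (j:ℤ)) (by push_cast; omega)]
    ring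

lemma vandApp (m1 m2 c k : ℕ) :
    ∑ i ∈ Finset.range (c + 1),
        qq ^ (((m1 : ℤ) - c) * i + (i : ℤ) ^ 2 - (k : ℤ) * i) *
          qbinom qq m1 ((c : ℤ) - i) * qbinom qq m2 ((i : ℤ) - k)
      = qq ^ (((m1 : ℤ) - c) * k) * qbinom qq (m1 + m2) ((c : ℤ) - k) := by
  rw [← Finset.sum_range_reflect]
  have step1 : ∀ s ∈ Finset.range (c + 1),
      qq ^ (((m1 : ℤ) - c) * ((c + 1 - 1 - s : ℕ) : ℤ) + ((c + 1 - 1 - s : ℕ) : ℤ) ^ 2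
            - (k : ℤ) * ((c + 1 - 1 - s : ℕ) : ℤ)) *
          qbinom qq m1 ((c : ℤ) - ((c + 1 - 1 - s : ℕ) : ℤ)) *
          qbinom qq m2 (((c + 1 - 1 - s : ℕ) : ℤ) - k)
        = qq ^ (((m1 : ℤ) - c) * k) *
            (qq ^ (((m1 : ℤ) - s) * (((c : ℤ) - k) - s)) * qbinom qq m1 (s : ℤ) *
              qbinom qq m2 (((c : ℤ) - k) - s)) := by
    intro s hs
    have hsc : s ≤ c := by simpa [Nat.lt_succ_iff] using hs
    have hc : ((c + 1 - 1 - s : ℕ) : ℤ) = (c : ℤ) - s := by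
      rw [show c + 1 - 1 - s = c - s from rfl, Nat.cast_sub hsc]
    rw [hc, show (c : ℤ) - ((c : ℤ) - s) = (s : ℤ) by ring,
      show ((c : ℤ) - s) - k = ((c : ℤ) - k) - s by ring,
      show ((m1 : ℤ) - c) * ((c:ℤ) - s) + ((c:ℤ) - s) ^ 2 - (k:ℤ) * ((c:ℤ) - s)
        = (((m1 : ℤ) - c) * k) + (((m1 : ℤ) - s) * (((c : ℤ) - k) - s)) by ring,
      zpow_add₀ qq_ne]
    ring
  rw [Finset.sum_congr rfl step1, ← Finset.mul_sum]
  congr 1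
  rw [qvand m1 m2 ((c : ℤ) - k)]
  rcases le_total c m1 with hcm | hcm
  · refine Finset.sum_subset (by simpa using Nat.succ_le_succ hcm) ?_
    intro s hs hns
    have : c < s := by simp at hs hns; omega
    rw [qbinom_of_neg m2 (j := ((c:ℤ) - k) - s) (by push_cast; omega), mul_zero]
  · refine (Finset.sum_subset (by simpa using Nat.succ_le_succ hcm) ?_).symm
    intro s hs hns
    have : m1 < s := by simp at hs hns; omega
    rw [qbinom_of_gt m1 (j := (s:ℤ)) (by push_cast; omega), mul_zero, zero_mul]

lemma inner_step (n1 n2 a b i j : ℕ) (hi : i ≤ a) :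
    qq ^ (((n1:ℤ)-a)*i + ((n2:ℤ)-b)*j - (i:ℤ)*j + (i:ℤ)^2 + (j:ℤ)^2) *
      (qbinom qq n1 ((a:ℤ)-i) * qbinom qq n2 ((b:ℤ)-j) *
       qbinom qq (n1+n2) ((n1:ℤ)+i-j) * qbinom qq (n1+i) (n1:ℤ) * qbinom qq (n2+j) (n2:ℤ))
    = qbinom qq (n1+n2) (n1:ℤ) *
        ∑ k ∈ Finset.range (a+1),
          (qq ^ (((n1:ℤ)-a)*i + (i:ℤ)^2 - (k:ℤ)*i) * qbinom qq n1 ((a:ℤ)-i) *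
              qbinom qq n2 ((i:ℤ)-k)) *
          ((qq ^ (((n2:ℤ)-b)*j + (j:ℤ)^2 - (k:ℤ)*j) * qbinom qq n2 ((b:ℤ)-j) *
              qbinom qq n1 ((j:ℤ)-k)) *
           (qq ^ ((k:ℤ)^2) * qbinom qq (n1+n2+k) (k:ℤ))) := by
  have hS : qbinom qq (n1+i) (j:ℤ) * qbinom qq (n2+j) (i:ℤ)
      = ∑ k ∈ Finset.range (a+1),
          qq ^ (((i:ℤ)-k)*((j:ℤ)-k)) * qbinom qq ((n1+n2)+k) (k:ℤ) *
            (qbinom qq n2 ((i:ℤ)-k) * qbinom qq n1 ((j:ℤ)-k)) := by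
    rw [← Kker n1 n2 i j, Sker]
    refine Finset.sum_subset (by simp; omega) ?_
    intro k hk hnk
    have hik : i < k := by simp at hk hnk; omega
    rw [qbinom_of_neg n2 (j := (i:ℤ)-k) (by omega)]
    ring
  calc qq ^ (((n1:ℤ)-a)*i + ((n2:ℤ)-b)*j - (i:ℤ)*j + (i:ℤ)^2 + (j:ℤ)^2) *
      (qbinom qq n1 ((a:ℤ)-i) * qbinom qq n2 ((b:ℤ)-j) *
       qbinom qq (n1+n2) ((n1:ℤ)+i-j) * qbinom qq (n1+i) (n1:ℤ) * qbinom qq (n2+j) (n2:ℤ))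
      = (qbinom qq (n1+n2) ((n1:ℤ)+i-j) * qbinom qq (n1+i) (n1:ℤ) *
            qbinom qq (n2+j) (n2:ℤ)) *
          (qq ^ (((n1:ℤ)-a)*i + ((n2:ℤ)-b)*j - (i:ℤ)*j + (i:ℤ)^2 + (j:ℤ)^2) *
            (qbinom qq n1 ((a:ℤ)-i) * qbinom qq n2 ((b:ℤ)-j))) := by ring
    _ = (qbinom qq (n1+n2) (n1:ℤ) *
          ∑ k ∈ Finset.range (a+1),
            qq ^ (((i:ℤ)-k)*((j:ℤ)-k)) * qbinom qq ((n1+n2)+k) (k:ℤ) *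
              (qbinom qq n2 ((i:ℤ)-k) * qbinom qq n1 ((j:ℤ)-k))) *
          (qq ^ (((n1:ℤ)-a)*i + ((n2:ℤ)-b)*j - (i:ℤ)*j + (i:ℤ)^2 + (j:ℤ)^2) *
            (qbinom qq n1 ((a:ℤ)-i) * qbinom qq n2 ((b:ℤ)-j))) := by
        rw [prodP2, hS]
    _ = qbinom qq (n1+n2) (n1:ℤ) *
          ∑ k ∈ Finset.range (a+1),
            (qq ^ (((i:ℤ)-k)*((j:ℤ)-k)) * qbinom qq ((n1+n2)+k) (k:ℤ) *
              (qbinom qq n2 ((i:ℤ)-k) * qbinom qq n1 ((j:ℤ)-k))) *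
            (qq ^ (((n1:ℤ)-a)*i + ((n2:ℤ)-b)*j - (i:ℤ)*j + (i:ℤ)^2 + (j:ℤ)^2) *
              (qbinom qq n1 ((a:ℤ)-i) * qbinom qq n2 ((b:ℤ)-j))) := by
        rw [mul_assoc, Finset.sum_mul]
    _ = _ := by
        congr 1
        refine Finset.sum_congr rfl fun k _ => ?_
        have hsplit : qq ^ (((i:ℤ)-k)*((j:ℤ)-k)) *
            qq ^ (((n1:ℤ)-a)*i + ((n2:ℤ)-b)*j - (i:ℤ)*j + (i:ℤ)^2 + (j:ℤ)^2)
            = qq ^ (((n1:ℤ)-a)*i + (i:ℤ)^2 - (k:ℤ)*i) *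
              qq ^ (((n2:ℤ)-b)*j + (j:ℤ)^2 - (k:ℤ)*j) * qq ^ ((k:ℤ)^2) := by
          rw [← zpow_add₀ qq_ne, ← zpow_add₀ qq_ne, ← zpow_add₀ qq_ne]
          congr 1
          ring
        calc (qq ^ (((i:ℤ)-k)*((j:ℤ)-k)) * qbinom qq ((n1+n2)+k) (k:ℤ) *
              (qbinom qq n2 ((i:ℤ)-k) * qbinom qq n1 ((j:ℤ)-k))) *
            (qq ^ (((n1:ℤ)-a)*i + ((n2:ℤ)-b)*j - (i:ℤ)*j + (i:ℤ)^2 + (j:ℤ)^2) *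
              (qbinom qq n1 ((a:ℤ)-i) * qbinom qq n2 ((b:ℤ)-j)))
            = (qq ^ (((i:ℤ)-k)*((j:ℤ)-k)) *
                qq ^ (((n1:ℤ)-a)*i + ((n2:ℤ)-b)*j - (i:ℤ)*j + (i:ℤ)^2 + (j:ℤ)^2)) *
              (qbinom qq ((n1+n2)+k) (k:ℤ) * (qbinom qq n2 ((i:ℤ)-k) * qbinom qq n1 ((j:ℤ)-k)) *
                (qbinom qq n1 ((a:ℤ)-i) * qbinom qq n2 ((b:ℤ)-j))) := by ring
          _ = (qq ^ (((n1:ℤ)-a)*i + (i:ℤ)^2 - (k:ℤ)*i) *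
              qq ^ (((n2:ℤ)-b)*j + (j:ℤ)^2 - (k:ℤ)*j) * qq ^ ((k:ℤ)^2)) *
              (qbinom qq ((n1+n2)+k) (k:ℤ) * (qbinom qq n2 ((i:ℤ)-k) * qbinom qq n1 ((j:ℤ)-k)) *
                (qbinom qq n1 ((a:ℤ)-i) * qbinom qq n2 ((b:ℤ)-j))) := by rw [hsplit]
          _ = _ := by
              rw [show n1+n2+k = (n1+n2)+k from rfl]
              ring

/-- **Hypergeometric identity.** For nonnegative integers `n1, n2, a, b` with
`n = n1 + n2`,
`Σ_{i,j ≥ 0} q^{(n1-a)i + (n2-b)j - ij + i² + j²}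
    [n1 choose a-i]_q [n2 choose b-j]_q [n1+n2 choose n1+i-j]_q
    [n1+i choose n1]_q [n2+j choose n2]_q
  = [n choose n1]_q Σ_{i ≥ 0} q^{(n-a-b)i + i²}
      [n+i choose i]_q [n choose a-i]_q [n choose b-i]_q`,
stated in the field of rational functions in `q = RatFunc.X`. -/
theorem q_hypergeometric_identity (n1 n2 a b : ℕ) :
    ∑ᶠ ij : ℕ × ℕ,
        (RatFunc.X : RatFunc ℚ) ^
            (((n1 : ℤ) - (a : ℤ)) * (ij.1 : ℤ) + ((n2 : ℤ) - (b : ℤ)) * (ij.2 : ℤ) -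
              (ij.1 : ℤ) * (ij.2 : ℤ) + (ij.1 : ℤ) ^ 2 + (ij.2 : ℤ) ^ 2) *
          (qbinom (RatFunc.X : RatFunc ℚ) n1 ((a : ℤ) - (ij.1 : ℤ)) *
            qbinom (RatFunc.X : RatFunc ℚ) n2 ((b : ℤ) - (ij.2 : ℤ)) *
            qbinom (RatFunc.X : RatFunc ℚ) (n1 + n2) ((n1 : ℤ) + (ij.1 : ℤ) - (ij.2 : ℤ)) *
            qbinom (RatFunc.X : RatFunc ℚ) (n1 + ij.1) ((n1 : ℤ)) *
            qbinom (RatFunc.X : RatFunc ℚ) (n2 + ij.2) ((n2 : ℤ)))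
      = qbinom (RatFunc.X : RatFunc ℚ) (n1 + n2) ((n1 : ℤ)) *
          ∑ᶠ i : ℕ,
            (RatFunc.X : RatFunc ℚ) ^
                (((n1 : ℤ) + (n2 : ℤ) - (a : ℤ) - (b : ℤ)) * (i : ℤ) + (i : ℤ) ^ 2) *
              (qbinom (RatFunc.X : RatFunc ℚ) (n1 + n2 + i) ((i : ℤ)) *
                qbinom (RatFunc.X : RatFunc ℚ) (n1 + n2) ((a : ℤ) - (i : ℤ)) *
                qbinom (RatFunc.X : RatFunc ℚ) (n1 + n2) ((b : ℤ) - (i : ℤ))) := by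
  have hL : ∑ᶠ ij : ℕ × ℕ,
        qq ^ (((n1 : ℤ) - (a : ℤ)) * (ij.1 : ℤ) + ((n2 : ℤ) - (b : ℤ)) * (ij.2 : ℤ) -
              (ij.1 : ℤ) * (ij.2 : ℤ) + (ij.1 : ℤ) ^ 2 + (ij.2 : ℤ) ^ 2) *
          (qbinom qq n1 ((a : ℤ) - (ij.1 : ℤ)) *
            qbinom qq n2 ((b : ℤ) - (ij.2 : ℤ)) *
            qbinom qq (n1 + n2) ((n1 : ℤ) + (ij.1 : ℤ) - (ij.2 : ℤ)) *
            qbinom qq (n1 + ij.1) ((n1 : ℤ)) *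
            qbinom qq (n2 + ij.2) ((n2 : ℤ)))
      = ∑ i ∈ Finset.range (a+1), ∑ j ∈ Finset.range (b+1),
          qq ^ (((n1 : ℤ) - (a : ℤ)) * (i : ℤ) + ((n2 : ℤ) - (b : ℤ)) * (j : ℤ) -
              (i : ℤ) * (j : ℤ) + (i : ℤ) ^ 2 + (j : ℤ) ^ 2) *
          (qbinom qq n1 ((a : ℤ) - (i : ℤ)) *
            qbinom qq n2 ((b : ℤ) - (j : ℤ)) *
            qbinom qq (n1 + n2) ((n1 : ℤ) + (i : ℤ) - (j : ℤ)) *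
            qbinom qq (n1 + i) ((n1 : ℤ)) *
            qbinom qq (n2 + j) ((n2 : ℤ))) := by
    rw [finsum_eq_sum_of_support_subset _
      (s := Finset.range (a+1) ×ˢ Finset.range (b+1)) ?_, Finset.sum_product]
    intro ij hij
    rw [Finset.coe_product]
    by_contra hc
    simp only [Set.mem_prod, Finset.mem_coe, Finset.mem_range, not_and_or, not_lt] at hc
    apply hij
    dsimp only
    rcases hc with hc | hc
    · rw [qbinom_of_neg n1 (j := (a:ℤ) - ij.1) (by omega)]
      ring
    · rw [qbinom_of_neg n2 (j := (b:ℤ) - ij.2) (by omega)]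
      ring
  have hR : ∑ᶠ i : ℕ,
        qq ^ (((n1 : ℤ) + (n2 : ℤ) - (a : ℤ) - (b : ℤ)) * (i : ℤ) + (i : ℤ) ^ 2) *
          (qbinom qq (n1 + n2 + i) ((i : ℤ)) *
            qbinom qq (n1 + n2) ((a : ℤ) - (i : ℤ)) *
            qbinom qq (n1 + n2) ((b : ℤ) - (i : ℤ)))
      = ∑ k ∈ Finset.range (a+1),
          qq ^ (((n1 : ℤ) + (n2 : ℤ) - (a : ℤ) - (b : ℤ)) * (k : ℤ) + (k : ℤ) ^ 2) *
          (qbinom qq (n1 + n2 + k) ((k : ℤ)) *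
            qbinom qq (n1 + n2) ((a : ℤ) - (k : ℤ)) *
            qbinom qq (n1 + n2) ((b : ℤ) - (k : ℤ))) := by
    rw [finsum_eq_sum_of_support_subset _ (s := Finset.range (a+1)) ?_]
    intro k hk
    rw [Finset.mem_coe, Finset.mem_range]
    by_contra hc
    push_neg at hc
    apply hk
    dsimp only
    rw [qbinom_of_neg (n1+n2) (j := (a:ℤ) - k) (by omega)]
    ring
  rw [hL, hR]
  calc ∑ i ∈ Finset.range (a+1), ∑ j ∈ Finset.range (b+1),
        qq ^ (((n1 : ℤ) - (a : ℤ)) * (i : ℤ) + ((n2 : ℤ) - (b : ℤ)) * (j : ℤ) -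
            (i : ℤ) * (j : ℤ) + (i : ℤ) ^ 2 + (j : ℤ) ^ 2) *
          (qbinom qq n1 ((a : ℤ) - (i : ℤ)) * qbinom qq n2 ((b : ℤ) - (j : ℤ)) *
            qbinom qq (n1 + n2) ((n1 : ℤ) + (i : ℤ) - (j : ℤ)) *
            qbinom qq (n1 + i) ((n1 : ℤ)) * qbinom qq (n2 + j) ((n2 : ℤ)))
      = ∑ i ∈ Finset.range (a+1), ∑ j ∈ Finset.range (b+1),
          qbinom qq (n1+n2) (n1:ℤ) *
            ∑ k ∈ Finset.range (a+1),
              (qq ^ (((n1:ℤ)-a)*i + (i:ℤ)^2 - (k:ℤ)*i) * qbinom qq n1 ((a:ℤ)-i) *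
                  qbinom qq n2 ((i:ℤ)-k)) *
              ((qq ^ (((n2:ℤ)-b)*j + (j:ℤ)^2 - (k:ℤ)*j) * qbinom qq n2 ((b:ℤ)-j) *
                  qbinom qq n1 ((j:ℤ)-k)) *
               (qq ^ ((k:ℤ)^2) * qbinom qq (n1+n2+k) (k:ℤ))) := by
        refine Finset.sum_congr rfl fun i hi => Finset.sum_congr rfl fun j hj => ?_
        exact inner_step n1 n2 a b i j (by simp at hi; omega)
    _ = qbinom qq (n1+n2) (n1:ℤ) *
          ∑ i ∈ Finset.range (a+1), ∑ j ∈ Finset.range (b+1), ∑ k ∈ Finset.range (a+1),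
              (qq ^ (((n1:ℤ)-a)*i + (i:ℤ)^2 - (k:ℤ)*i) * qbinom qq n1 ((a:ℤ)-i) *
                  qbinom qq n2 ((i:ℤ)-k)) *
              ((qq ^ (((n2:ℤ)-b)*j + (j:ℤ)^2 - (k:ℤ)*j) * qbinom qq n2 ((b:ℤ)-j) *
                  qbinom qq n1 ((j:ℤ)-k)) *
               (qq ^ ((k:ℤ)^2) * qbinom qq (n1+n2+k) (k:ℤ))) := by
        simp only [← Finset.mul_sum]
    _ = qbinom qq (n1+n2) (n1:ℤ) *
          ∑ k ∈ Finset.range (a+1), ∑ i ∈ Finset.range (a+1), ∑ j ∈ Finset.range (b+1),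
              (qq ^ (((n1:ℤ)-a)*i + (i:ℤ)^2 - (k:ℤ)*i) * qbinom qq n1 ((a:ℤ)-i) *
                  qbinom qq n2 ((i:ℤ)-k)) *
              ((qq ^ (((n2:ℤ)-b)*j + (j:ℤ)^2 - (k:ℤ)*j) * qbinom qq n2 ((b:ℤ)-j) *
                  qbinom qq n1 ((j:ℤ)-k)) *
               (qq ^ ((k:ℤ)^2) * qbinom qq (n1+n2+k) (k:ℤ))) := by
        congr 1
        rw [show (∑ i ∈ Finset.range (a+1), ∑ j ∈ Finset.range (b+1), ∑ k ∈ Finset.range (a+1),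
              (qq ^ (((n1:ℤ)-a)*i + (i:ℤ)^2 - (k:ℤ)*i) * qbinom qq n1 ((a:ℤ)-i) *
                  qbinom qq n2 ((i:ℤ)-k)) *
              ((qq ^ (((n2:ℤ)-b)*j + (j:ℤ)^2 - (k:ℤ)*j) * qbinom qq n2 ((b:ℤ)-j) *
                  qbinom qq n1 ((j:ℤ)-k)) *
               (qq ^ ((k:ℤ)^2) * qbinom qq (n1+n2+k) (k:ℤ))))
            = ∑ i ∈ Finset.range (a+1), ∑ k ∈ Finset.range (a+1), ∑ j ∈ Finset.range (b+1),
              (qq ^ (((n1:ℤ)-a)*i + (i:ℤ)^2 - (k:ℤ)*i) * qbinom qq n1 ((a:ℤ)-i) *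
                  qbinom qq n2 ((i:ℤ)-k)) *
              ((qq ^ (((n2:ℤ)-b)*j + (j:ℤ)^2 - (k:ℤ)*j) * qbinom qq n2 ((b:ℤ)-j) *
                  qbinom qq n1 ((j:ℤ)-k)) *
               (qq ^ ((k:ℤ)^2) * qbinom qq (n1+n2+k) (k:ℤ)))
          from Finset.sum_congr rfl fun i _ => Finset.sum_comm .. ]
        exact Finset.sum_comm ..
    _ = qbinom qq (n1+n2) (n1:ℤ) *
          ∑ k ∈ Finset.range (a+1),
            (∑ i ∈ Finset.range (a+1),
              qq ^ (((n1:ℤ)-a)*i + (i:ℤ)^2 - (k:ℤ)*i) * qbinom qq n1 ((a:ℤ)-i) *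
                  qbinom qq n2 ((i:ℤ)-k)) *
            ((∑ j ∈ Finset.range (b+1),
              qq ^ (((n2:ℤ)-b)*j + (j:ℤ)^2 - (k:ℤ)*j) * qbinom qq n2 ((b:ℤ)-j) *
                  qbinom qq n1 ((j:ℤ)-k)) *
             (qq ^ ((k:ℤ)^2) * qbinom qq (n1+n2+k) (k:ℤ))) := by
        congr 1
        refine Finset.sum_congr rfl fun k _ => ?_
        refine (Finset.sum_congr rfl fun i _ => ?_).trans (Finset.sum_mul ..).symm
        rw [← Finset.mul_sum, ← Finset.sum_mul]
    _ = _ := by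
        congr 1
        refine Finset.sum_congr rfl fun k _ => ?_
        rw [vandApp n1 n2 a k, vandApp n2 n1 b k,
          show n2 + n1 = n1 + n2 from Nat.add_comm n2 n1]
        rw [show (qq ^ (((n1:ℤ) - a) * k) * qbinom qq (n1+n2) ((a:ℤ) - k)) *
              ((qq ^ (((n2:ℤ) - b) * k) * qbinom qq (n1+n2) ((b:ℤ) - k)) *
               (qq ^ ((k:ℤ)^2) * qbinom qq (n1+n2+k) (k:ℤ)))
            = (qq ^ (((n1:ℤ) - a) * k) * qq ^ (((n2:ℤ) - b) * k) * qq ^ ((k:ℤ)^2)) *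
              (qbinom qq (n1+n2+k) (k:ℤ) * qbinom qq (n1+n2) ((a:ℤ) - k) *
                qbinom qq (n1+n2) ((b:ℤ) - k)) by ring]
        rw [← zpow_add₀ qq_ne, ← zpow_add₀ qq_ne,
          show ((n1:ℤ) - a) * k + ((n2:ℤ) - b) * k + (k:ℤ)^2
            = ((n1:ℤ) + n2 - a - b) * k + (k:ℤ)^2 by ring]

end DyckTilings
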